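/- Let L be a finite distributive lattice and let I, J be Boolean intervals in L (intervals that are isomorphic to Boolean lattices). Then the set I ∨ J = { i ∨ j : i ∈ I, j ∈ J } is again a Boolean interval in L, and dually I ∧ J = { i ∧ j : i ∈ I, j ∈ J } is a Boolean interval in L. -/

import Mathlib

/-- The interval `Set.Icc a b` is a Boolean interval: it is nonempty (i.e. `a ≤ b`)
and, as a lattice, isomorphic to a finite Boolean lattice `[1]^k`. -/
def IsBooleanIcc {L : Type*} [Lattice L] (a b : L) : Prop :=
  a ≤ b ∧ ∃ k : ℕ, Nonempty (Set.Icc a b ≃o (Fin k → Bool))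

lemma finite_boolean_rep (B : Type*) [BooleanAlgebra B] [Fintype B] :
    ∃ k : ℕ, Nonempty (B ≃o (Fin k → Bool)) := by
  classical
  haveI : Nonempty B := ⟨⊤⟩
  letI : CompleteAtomicBooleanAlgebra B := Fintype.toCompleteAtomicBooleanAlgebra B
  set A := {a : B // IsAtom a} with hA
  have atom_le_atom : ∀ (a b : A), (a : B) ≤ (b : B) → a = b := by
    rintro ⟨a, ha⟩ ⟨b, hb⟩ (h : a ≤ b)
    rcases lt_or_eq_of_le h with h' | h'
    · exact absurd (hb.2 _ h') ha.1
    · simp [h']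
  have key : ∀ (f : A → Bool) (a : A),
      ((a : B) ≤ sSup (Subtype.val '' {a' : A | f a' = true})) ↔ f a = true := by
    intro f a
    rw [sSup_eq_iSup', a.2.le_iSup]
    constructor
    · rintro ⟨⟨b, ⟨a', ha', rfl⟩⟩, hle⟩
      rwa [atom_le_atom a a' hle]
    · intro h
      exact ⟨⟨a, a, h, rfl⟩, le_rfl⟩
  have left : ∀ x : B, sSup (Subtype.val '' {a : A | decide ((a : B) ≤ x) = true}) = x := by
    intro x
    have : Subtype.val '' {a : A | decide ((a : B) ≤ x) = true} = {a : B | IsAtom a ∧ a ≤ x} := by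
      ext b
      constructor
      · rintro ⟨⟨a, ha⟩, h, rfl⟩
        exact ⟨ha, of_decide_eq_true h⟩
      · rintro ⟨hb, hbx⟩
        exact ⟨⟨b, hb⟩, decide_eq_true hbx, rfl⟩
    rw [this]
    exact sSup_atoms_le_eq x
  let e : B ≃o (A → Bool) :=
    { toFun := fun x a => decide ((a : B) ≤ x)
      invFun := fun f => sSup (Subtype.val '' {a : A | f a = true})
      left_inv := fun x => left x
      right_inv := by
        intro f
        funext a
        have := key f a
        by_cases h : f a = true
        · simpa [h] using this.2 h
        · simp only [Bool.not_eq_true] at h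
          have : ¬ ((a : B) ≤ sSup (Subtype.val '' {a' : A | f a' = true})) := by
            rw [key f a]; simp [h]
          simp [this, h]
      map_rel_iff' := by
        intro x y
        constructor
        · intro h
          rw [← sSup_atoms_le_eq x]
          apply sSup_le
          rintro b ⟨hb, hbx⟩
          have := h ⟨b, hb⟩
          simp only [Equiv.coe_fn_mk] at this
          by_contra hby
          rw [decide_eq_true hbx, decide_eq_false hby] at this
          exact absurd this (by simp)
        · intro h a
          by_cases hax : (a : B) ≤ x
          · simp [hax, hax.trans h]
          · simp [hax] }
  refine ⟨Fintype.card A, ⟨e.trans ?_⟩⟩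
  let σ : A ≃ Fin (Fintype.card A) := Fintype.equivFin A
  exact
    { toEquiv := σ.arrowCongr (Equiv.refl Bool)
      map_rel_iff' := by
        intro f g
        constructor
        · intro h a
          have := h (σ a)
          simpa [Equiv.arrowCongr] using this
        · intro h i
          simpa [Equiv.arrowCongr] using h (σ.symm i) }


lemma isBooleanIcc_of_complemented {L : Type*} [DistribLattice L] [Fintype L] {p q : L}
    (hpq : p ≤ q)
    (hc : ∀ x, p ≤ x → x ≤ q → ∃ y, p ≤ y ∧ y ≤ q ∧ x ⊓ y = p ∧ x ⊔ y = q) :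
    IsBooleanIcc p q := by
  classical
  refine ⟨hpq, ?_⟩
  haveI : Fact (p ≤ q) := ⟨hpq⟩
  letI : Fintype (Set.Icc p q) := Fintype.ofFinite _
  letI : DistribLattice (Set.Icc p q) :=
    { (inferInstance : Lattice (Set.Icc p q)) with
      le_sup_inf := by
        rintro x y z
        show ((x : L) ⊔ y) ⊓ ((x : L) ⊔ z) ≤ (x : L) ⊔ (y ⊓ z)
        exact le_sup_inf }
  haveI : ComplementedLattice (Set.Icc p q) := by
    constructor
    rintro ⟨x, hx1, hx2⟩
    obtain ⟨y, hy1, hy2, hxy1, hxy2⟩ := hc x hx1 hx2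
    refine ⟨⟨y, hy1, hy2⟩, IsCompl.of_eq ?_ ?_⟩
    · exact Subtype.ext hxy1
    · exact Subtype.ext hxy2
  letI : BooleanAlgebra (Set.Icc p q) := DistribLattice.booleanAlgebraOfComplemented _
  exact finite_boolean_rep _

lemma complemented_of_isBooleanIcc {L : Type*} [Lattice L] {a b : L} (h : IsBooleanIcc a b) :
    ∀ x, a ≤ x → x ≤ b → ∃ y, a ≤ y ∧ y ≤ b ∧ x ⊓ y = a ∧ x ⊔ y = b := by
  obtain ⟨hab, k, ⟨e⟩⟩ := h
  intro x hx1 hx2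
  set X : Set.Icc a b := ⟨x, hx1, hx2⟩ with hX
  set Y : Set.Icc a b := e.symm (fun i => !(e X i)) with hY
  have hA : ∀ z : Set.Icc a b, (⟨a, le_refl a, hab⟩ : Set.Icc a b) ≤ z := fun z => z.2.1
  have hB : ∀ z : Set.Icc a b, z ≤ (⟨b, hab, le_refl b⟩ : Set.Icc a b) := fun z => z.2.2
  have heA : e ⟨a, le_refl a, hab⟩ = fun _ => false := by
    apply le_antisymm
    · obtain ⟨z, hz⟩ := e.surjective (fun _ => false)
      rw [← hz]
      exact e.monotone (hA z)
    · intro i; exact Bool.false_le _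
  have heB : e ⟨b, hab, le_refl b⟩ = fun _ => true := by
    apply le_antisymm
    · intro i; exact Bool.le_true _
    · obtain ⟨z, hz⟩ := e.surjective (fun _ => true)
      rw [← hz]
      exact e.monotone (hB z)
  have hinf : X ⊓ Y = ⟨a, le_refl a, hab⟩ := by
    apply e.injective
    rw [map_inf, heA, hY, e.apply_symm_apply]
    funext i
    show (e X i) ⊓ (!(e X i)) = false
    cases (e X i) <;> rfl
  have hsup : X ⊔ Y = ⟨b, hab, le_refl b⟩ := by
    apply e.injective
    rw [map_sup, heB, hY, e.apply_symm_apply]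
    funext i
    show (e X i) ⊔ (!(e X i)) = true
    cases (e X i) <;> rfl
  exact ⟨Y.1, Y.2.1, Y.2.2, congrArg Subtype.val hinf, congrArg Subtype.val hsup⟩

/-- In a finite distributive lattice, the pointwise join and the pointwise meet of
two Boolean intervals are again Boolean intervals. -/
theorem booleanIcc_sup_inf (L : Type*) [DistribLattice L] [Fintype L]
    (a b c d : L) (hI : IsBooleanIcc a b) (hJ : IsBooleanIcc c d) :
    (∃ p q : L, Set.image2 (· ⊔ ·) (Set.Icc a b) (Set.Icc c d) = Set.Icc p q ∧
        IsBooleanIcc p q) ∧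
    (∃ p q : L, Set.image2 (· ⊓ ·) (Set.Icc a b) (Set.Icc c d) = Set.Icc p q ∧
        IsBooleanIcc p q) := by
  obtain ⟨hab, _⟩ := id hI
  obtain ⟨hcd, _⟩ := id hJ
  have hIc := complemented_of_isBooleanIcc hI
  have hJc := complemented_of_isBooleanIcc hJ
  constructor
  · -- sup part
    refine ⟨a ⊔ c, b ⊔ d, ?_, ?_⟩
    · ext x
      simp only [Set.mem_image2, Set.mem_Icc]
      constructor
      · rintro ⟨i, ⟨hi1, hi2⟩, j, ⟨hj1, hj2⟩, rfl⟩
        exact ⟨sup_le_sup hi1 hj1, sup_le_sup hi2 hj2⟩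
      · rintro ⟨hx1, hx2⟩
        have hax : a ≤ x := le_trans le_sup_left hx1
        have hcx : c ≤ x := le_trans le_sup_right hx1
        refine ⟨(x ⊓ b) ⊔ a, ⟨le_sup_right, sup_le inf_le_right hab⟩,
          (x ⊓ d) ⊔ c, ⟨le_sup_right, sup_le inf_le_right hcd⟩, ?_⟩
        rw [sup_sup_sup_comm, ← inf_sup_left, inf_eq_left.2 hx2, sup_eq_left.2 hx1]
    · apply isBooleanIcc_of_complemented (sup_le_sup hab hcd)
      intro x hx1 hx2
      have hax : a ≤ x := le_trans le_sup_left hx1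
      have hcx : c ≤ x := le_trans le_sup_right hx1
      set i := (x ⊓ b) ⊔ a with hi
      set j := (x ⊓ d) ⊔ c with hj
      have hia : a ≤ i := le_sup_right
      have hib : i ≤ b := sup_le inf_le_right hab
      have hjc : c ≤ j := le_sup_right
      have hjd : j ≤ d := sup_le inf_le_right hcd
      have hix : i ≤ x := sup_le inf_le_left hax
      have hjx : j ≤ x := sup_le inf_le_left hcx
      have hij : i ⊔ j = x := by
        rw [hi, hj, sup_sup_sup_comm, ← inf_sup_left, inf_eq_left.2 hx2, sup_eq_left.2 hx1]
      clear_value i j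
      obtain ⟨i', hi'a, hi'b, hii'1, hii'2⟩ := hIc i hia hib
      obtain ⟨j', hj'c, hj'd, hjj'1, hjj'2⟩ := hJc j hjc hjd
      refine ⟨i' ⊔ j', sup_le_sup hi'a hj'c, sup_le_sup hi'b hj'd, ?_, ?_⟩
      · -- x ⊓ (i' ⊔ j') = a ⊔ c
        have hij' : i ⊓ j' ≤ c := by
          have h1 : i ⊓ j' ≤ j := by
            calc i ⊓ j' ≤ x ⊓ d := inf_le_inf hix hj'd
            _ ≤ j := by rw [hj]; exact le_sup_left
          calc i ⊓ j' ≤ j ⊓ j' := le_inf h1 inf_le_right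
          _ = c := hjj'1
        have hji' : j ⊓ i' ≤ a := by
          have h1 : j ⊓ i' ≤ i := by
            calc j ⊓ i' ≤ x ⊓ b := inf_le_inf hjx hi'b
            _ ≤ i := by rw [hi]; exact le_sup_left
          calc j ⊓ i' ≤ i ⊓ i' := le_inf h1 inf_le_right
          _ = a := hii'1
        have expand : x ⊓ (i' ⊔ j') = (i ⊓ i' ⊔ i ⊓ j') ⊔ (j ⊓ i' ⊔ j ⊓ j') := by
          rw [← hij, inf_sup_right, inf_sup_left, inf_sup_left]
        apply le_antisymm
        · rw [expand, hii'1, hjj'1]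
          exact sup_le (sup_le le_sup_left (hij'.trans le_sup_right))
            (sup_le (hji'.trans le_sup_left) le_sup_right)
        · exact le_inf hx1 (sup_le_sup hi'a hj'c)
      · -- x ⊔ (i' ⊔ j') = b ⊔ d
        rw [← hij, sup_sup_sup_comm, hii'2, hjj'2]
  · -- inf part
    refine ⟨a ⊓ c, b ⊓ d, ?_, ?_⟩
    · ext x
      simp only [Set.mem_image2, Set.mem_Icc]
      constructor
      · rintro ⟨i, ⟨hi1, hi2⟩, j, ⟨hj1, hj2⟩, rfl⟩
        exact ⟨inf_le_inf hi1 hj1, inf_le_inf hi2 hj2⟩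
      · rintro ⟨hx1, hx2⟩
        have hxb : x ≤ b := le_trans hx2 inf_le_left
        have hxd : x ≤ d := le_trans hx2 inf_le_right
        refine ⟨(x ⊔ a) ⊓ b, ⟨le_inf le_sup_right hab, inf_le_right⟩,
          (x ⊔ c) ⊓ d, ⟨le_inf le_sup_right hcd, inf_le_right⟩, ?_⟩
        rw [inf_inf_inf_comm, ← sup_inf_left, sup_eq_left.2 hx1, inf_eq_left.2 hx2]
    · apply isBooleanIcc_of_complemented (inf_le_inf hab hcd)
      intro x hx1 hx2
      have hxb : x ≤ b := le_trans hx2 inf_le_left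
      have hxd : x ≤ d := le_trans hx2 inf_le_right
      set i := (x ⊔ a) ⊓ b with hi
      set j := (x ⊔ c) ⊓ d with hj
      have hia : a ≤ i := le_inf le_sup_right hab
      have hib : i ≤ b := inf_le_right
      have hjc : c ≤ j := le_inf le_sup_right hcd
      have hjd : j ≤ d := inf_le_right
      have hxi : x ≤ i := le_inf le_sup_left hxb
      have hxj : x ≤ j := le_inf le_sup_left hxd
      have hij : i ⊓ j = x := by
        rw [hi, hj, inf_inf_inf_comm, ← sup_inf_left, sup_eq_left.2 hx1, inf_eq_left.2 hx2]
      clear_value i j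
      obtain ⟨i', hi'a, hi'b, hii'1, hii'2⟩ := hIc i hia hib
      obtain ⟨j', hj'c, hj'd, hjj'1, hjj'2⟩ := hJc j hjc hjd
      refine ⟨i' ⊓ j', inf_le_inf hi'a hj'c, inf_le_inf hi'b hj'd, ?_, ?_⟩
      · -- x ⊓ (i' ⊓ j') = a ⊓ c
        rw [← hij, inf_inf_inf_comm, hii'1, hjj'1]
      · -- x ⊔ (i' ⊓ j') = b ⊓ d
        have hij' : d ≤ i ⊔ j' := by
          have h1 : j ≤ i ⊔ j' := by
            calc j ≤ x ⊔ c := by rw [hj]; exact inf_le_left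
            _ ≤ i ⊔ j' := sup_le_sup hxi hj'c
          calc d = j ⊔ j' := hjj'2.symm
          _ ≤ i ⊔ j' := sup_le h1 le_sup_right
        have hji' : b ≤ j ⊔ i' := by
          have h1 : i ≤ j ⊔ i' := by
            calc i ≤ x ⊔ a := by rw [hi]; exact inf_le_left
            _ ≤ j ⊔ i' := sup_le_sup hxj hi'a
          calc b = i ⊔ i' := hii'2.symm
          _ ≤ j ⊔ i' := sup_le h1 le_sup_right
        have expand : x ⊔ i' ⊓ j' = ((i ⊔ i') ⊓ (j ⊔ i')) ⊓ ((i ⊔ j') ⊓ (j ⊔ j')) := by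
          rw [← hij, sup_inf_left, sup_inf_right, sup_inf_right]
        apply le_antisymm
        · exact sup_le hx2 (inf_le_inf hi'b hj'd)
        · rw [expand, hii'2, hjj'2]
          exact le_inf (le_inf inf_le_left (inf_le_left.trans hji'))
            (le_inf (inf_le_right.trans hij') inf_le_right)
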